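/- Let t ∈ [0,1) and m ∈ ℕ₀. Then C_t x^{[m]} = (1/(m+1)) x^{[m]}, and moreover every complex sequence x satisfying C_t x = (1/(m+1)) x is a scalar multiple of x^{[m]}; more precisely, such an x equals x_m · x^{[m]} (its m-th coordinate determines it uniquely). -/

import Mathlib

/-- The generalized Cesàro operator `C_t` acting on complex sequences:
`(C_t x)_n = (1/(n+1)) ∑_{i=0}^n t^{n-i} x_i`. -/
noncomputable def genCesaro (t : ℝ) (x : ℕ → ℂ) : ℕ → ℂ :=
  fun n => (1 / ((n : ℂ) + 1)) * ∑ i ∈ Finset.range (n + 1), (t : ℂ) ^ (n - i) * x i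

/-- The eigenvector `x^{[m]}`: `x^{[m]}_n = 0` for `n < m` and
`x^{[m]}_n = C(n,m) t^{n-m}` for `n ≥ m`. -/
noncomputable def eigvec (t : ℝ) (m : ℕ) : ℕ → ℂ :=
  fun n => if n < m then 0 else (Nat.choose n m : ℂ) * (t : ℂ) ^ (n - m)

private lemma sum_step (t : ℝ) (x : ℕ → ℂ) (n : ℕ) :
    ∑ i ∈ Finset.range (n + 2), (t : ℂ) ^ (n + 1 - i) * x i
      = (t : ℂ) * ∑ i ∈ Finset.range (n + 1), (t : ℂ) ^ (n - i) * x i + x (n + 1) := by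
  rw [Finset.sum_range_succ, Finset.mul_sum]
  congr 1
  · apply Finset.sum_congr rfl
    intro i hi
    rw [Finset.mem_range] at hi
    have h : n + 1 - i = (n - i) + 1 := by omega
    rw [h, pow_succ]
    ring
  · simp

/-- Characterization of the eigenvalue equation via a first-order recurrence. -/
private lemma char (t : ℝ) (m : ℕ) (x : ℕ → ℂ) :
    genCesaro t x = (1 / ((m : ℂ) + 1)) • x ↔
    ((m : ℂ) * x 0 = 0 ∧
      ∀ n : ℕ, ((n : ℂ) + 1 - m) * x (n + 1) = t * ((n : ℂ) + 1) * x n) := by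
  have hm : ((m : ℂ) + 1) ≠ 0 := Nat.cast_add_one_ne_zero m
  have hn : ∀ n : ℕ, ((n : ℂ) + 1) ≠ 0 := fun n => Nat.cast_add_one_ne_zero n
  constructor
  · intro h
    have hp : ∀ n : ℕ, ((m : ℂ) + 1) * (∑ i ∈ Finset.range (n + 1), (t : ℂ) ^ (n - i) * x i)
        = ((n : ℂ) + 1) * x n := by
      intro n
      have h1 := congrFun h n
      simp only [genCesaro, Pi.smul_apply, smul_eq_mul] at h1
      field_simp [hm, hn n] at h1
      linear_combination h1
    refine ⟨?_, ?_⟩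
    · have h0 := hp 0
      simp at h0
      linear_combination h0
    · intro n
      have h1 := hp n
      have h2 := hp (n + 1)
      rw [sum_step] at h2
      push_cast at h2 ⊢
      linear_combination t * h1 - h2
  · rintro ⟨h0, hrec⟩
    have hp : ∀ n : ℕ, ((m : ℂ) + 1) * (∑ i ∈ Finset.range (n + 1), (t : ℂ) ^ (n - i) * x i)
        = ((n : ℂ) + 1) * x n := by
      intro n
      induction n with
      | zero => simp; linear_combination h0
      | succ n ih =>
        rw [sum_step]
        push_cast
        linear_combination t * ih - hrec n
    funext n
    simp only [genCesaro, Pi.smul_apply, smul_eq_mul]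
    field_simp [hm, hn n]
    linear_combination hp n

/-- The eigenvector recurrence, as a complex identity. -/
private lemma eigvec_rec (t : ℝ) (m : ℕ) (n : ℕ) :
    ((n : ℂ) + 1 - m) * eigvec t m (n + 1) = t * ((n : ℂ) + 1) * eigvec t m n := by
  simp only [eigvec]
  rcases lt_trichotomy (n + 1) m with h | h | h
  · rw [if_pos h, if_pos (by omega)]
    ring
  · subst h
    rw [if_neg (by omega), if_pos (by omega)]
    push_cast
    ring
  · rw [if_neg (by omega), if_neg (by omega)]
    have hb := Nat.choose_mul_succ_eq n m
    have hle : m ≤ n + 1 := by omega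
    have hcast : ((n.choose m : ℂ)) * ((n : ℂ) + 1)
        = ((n + 1).choose m : ℂ) * ((n : ℂ) + 1 - m) := by
      calc ((n.choose m : ℂ)) * ((n : ℂ) + 1)
          = ((n.choose m * (n + 1) : ℕ) : ℂ) := by push_cast; ring
        _ = (((n + 1).choose m * (n + 1 - m) : ℕ) : ℂ) := by rw [hb]
        _ = ((n + 1).choose m : ℂ) * ((n : ℂ) + 1 - m) := by push_cast [hle]; ring
    have hpow : (t : ℂ) ^ (n + 1 - m) = (t : ℂ) ^ (n - m) * t := by
      have h2 : n + 1 - m = (n - m) + 1 := by omega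
      rw [h2, pow_succ]
    rw [hpow]
    linear_combination (-((t : ℂ) ^ (n - m)) * t) * hcast

/-- Let `t ∈ [0,1)` and `m ∈ ℕ`. Then `C_t x^{[m]} = (1/(m+1)) x^{[m]}`, and every
complex sequence `x` with `C_t x = (1/(m+1)) x` equals `x_m • x^{[m]}`. -/
theorem genCesaro_eigvec_unique (t : ℝ) (ht : t ∈ Set.Ico (0 : ℝ) 1) (m : ℕ) :
    genCesaro t (eigvec t m) = (1 / ((m : ℂ) + 1)) • eigvec t m ∧
    ∀ x : ℕ → ℂ, genCesaro t x = (1 / ((m : ℂ) + 1)) • x → x = x m • eigvec t m := by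
  constructor
  · rw [char]
    refine ⟨?_, eigvec_rec t m⟩
    rcases Nat.eq_zero_or_pos m with hm | hm
    · simp [hm]
    · simp [eigvec, hm]
  · intro x hx
    rw [char] at hx
    obtain ⟨h0, hrec⟩ := hx
    -- x n = 0 for n < m
    have hlt : ∀ n, n < m → x n = 0 := by
      intro n
      induction n with
      | zero =>
        intro h
        have hm0 : (m : ℂ) ≠ 0 := by exact_mod_cast Nat.pos_iff_ne_zero.mp h
        exact (mul_eq_zero.mp h0).resolve_left hm0
      | succ n ih =>
        intro h
        have hx0 : x n = 0 := ih (by omega)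
        have hr := hrec n
        rw [hx0] at hr
        have hne : ((n : ℂ) + 1 - m) ≠ 0 := by
          intro hz
          have hc : ((n + 1 : ℕ) : ℂ) = ((m : ℕ) : ℂ) := by push_cast; linear_combination hz
          have := Nat.cast_injective hc
          omega
        have hz : ((n : ℂ) + 1 - m) * x (n + 1) = 0 := by rw [hr]; ring
        exact (mul_eq_zero.mp hz).resolve_left hne
    -- x n = x m * eigvec n for n ≥ m
    have hge : ∀ n, m ≤ n → x n = x m * eigvec t m n := by
      intro n hmn
      induction n, hmn using Nat.le_induction with
      | base => simp [eigvec]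
      | succ n hn ih =>
        have hne : ((n : ℂ) + 1 - m) ≠ 0 := by
          intro hz
          have hc : ((n + 1 : ℕ) : ℂ) = ((m : ℕ) : ℂ) := by push_cast; linear_combination hz
          have := Nat.cast_injective hc
          omega
        have h1 := hrec n
        rw [ih] at h1
        have h2 := eigvec_rec t m n
        have hz : ((n : ℂ) + 1 - m) * (x (n + 1) - x m * eigvec t m (n + 1)) = 0 := by
          linear_combination h1 - x m * h2
        have h3 := (mul_eq_zero.mp hz).resolve_left hne
        linear_combination h3
    funext n
    simp only [Pi.smul_apply, smul_eq_mul]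
    rcases lt_or_ge n m with h | h
    · rw [hlt n h]
      simp [eigvec, h]
    · exact hge n h
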